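/- Let P ⊆ ℝ^d be the intersection of d+1 closed tropical halfspaces. If P is bounded and P is not contained in any tropical hyperplane, then P is the tropical convex hull of some d+1 points of ℝ^d. -/

import Mathlib

open Set

noncomputable section

/-- Extended (homogeneous) coordinates of a point of `TA^d ≅ ℝ^d`:
the 0-th coordinate is normalized to `0`. -/
def ext {d : ℕ} (x : Fin d → ℝ) : Fin (d + 1) → ℝ := Fin.cons 0 x

/-- The tropical combination of `(l, x)` and `(m, y)`. -/
def tropComb {d : ℕ} (l m : ℝ) (x y : Fin d → ℝ) : Fin d → ℝ :=
  fun i => min (l + x i) (m + y i) - min l m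

/-- A set is tropically convex if it is closed under tropical combinations. -/
def TropConvex {d : ℕ} (S : Set (Fin d → ℝ)) : Prop :=
  ∀ x ∈ S, ∀ y ∈ S, ∀ l m : ℝ, tropComb l m x y ∈ S

/-- The tropical convex hull: the intersection of all tropically convex supersets. -/
def tconv {d : ℕ} (V : Set (Fin d → ℝ)) : Set (Fin d → ℝ) :=
  ⋂₀ {S : Set (Fin d → ℝ) | TropConvex S ∧ V ⊆ S}

/-- A tropical polytope is the tropical convex hull of a finite set. -/
def IsTropPolytope {d : ℕ} (P : Set (Fin d → ℝ)) : Prop :=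
  ∃ V : Finset (Fin d → ℝ), P = tconv (V : Set (Fin d → ℝ))

/-- A polytrope is a tropical polytope which is also convex in the ordinary sense. -/
def IsPolytrope {d : ℕ} (P : Set (Fin d → ℝ)) : Prop :=
  IsTropPolytope P ∧ Convex ℝ P

/-- The closed tropical halfspace with apex `a` (with `a_0 := 0`) and type `I`:
the set of `x` with `min_{i ∈ I} (x_i - a_i) ≤ min_{j ∉ I} (x_j - a_j)`. -/
def tropHalfspace {d : ℕ} (a : Fin d → ℝ) (I : Set (Fin (d + 1))) : Set (Fin d → ℝ) :=
  {x | ∀ j ∉ I, ∃ i ∈ I, ext x i - ext a i ≤ ext x j - ext a j}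

/-- The tropical hyperplane with apex `a` (with `a_0 := 0`): the set of points where the
minimum `min_i (x_i - a_i)` is attained at least twice. -/
def tropHyperplane {d : ℕ} (a : Fin d → ℝ) : Set (Fin d → ℝ) :=
  {x | ∃ i j : Fin (d + 1), i ≠ j ∧
    (∀ k, ext x i - ext a i ≤ ext x k - ext a k) ∧
    ext x i - ext a i = ext x j - ext a j}

/- ### Auxiliary lemmas -/

lemma tp_ext_zero {d : ℕ} (x : Fin d → ℝ) : ext x 0 = 0 := rfl

lemma tp_ext_succ {d : ℕ} (x : Fin d → ℝ) (i : Fin d) : ext x i.succ = x i := by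
  simp [_root_.ext]

lemma tp_continuous_ext {d : ℕ} (l : Fin (d + 1)) :
    Continuous (fun x : Fin d → ℝ => ext x l) := by
  induction l using Fin.cases with
  | zero => simpa [_root_.ext] using continuous_const
  | succ i => simpa [_root_.ext] using continuous_apply i

lemma tp_ext_tropComb {d : ℕ} (l m : ℝ) (x y : Fin d → ℝ) (i : Fin (d + 1)) :
    ext (tropComb l m x y) i = min (l + ext x i) (m + ext y i) - min l m := by
  induction i using Fin.cases with
  | zero => simp [_root_.ext, tropComb]
  | succ j => simp [_root_.ext, tropComb]

lemma tp_tropConvex_halfspace {d : ℕ} (a : Fin d → ℝ) (I : Set (Fin (d + 1))) :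
    TropConvex (tropHalfspace a I) := by
  intro x hx y hy l m j hj
  rcases le_total (l + ext x j) (m + ext y j) with h | h
  · obtain ⟨i, hiI, hix⟩ := hx j hj
    refine ⟨i, hiI, ?_⟩
    rw [tp_ext_tropComb, tp_ext_tropComb, min_eq_left h]
    have h1 : min (l + ext x i) (m + ext y i) ≤ l + ext x i := min_le_left _ _
    linarith
  · obtain ⟨i, hiI, hiy⟩ := hy j hj
    refine ⟨i, hiI, ?_⟩
    rw [tp_ext_tropComb, tp_ext_tropComb, min_eq_right h]
    have h1 : min (l + ext x i) (m + ext y i) ≤ m + ext y i := min_le_right _ _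
    linarith

lemma tp_tropConvex_iInter {d : ℕ} {ι : Sort*} {S : ι → Set (Fin d → ℝ)}
    (h : ∀ i, TropConvex (S i)) : TropConvex (⋂ i, S i) := by
  intro x hx y hy l m
  simp only [Set.mem_iInter] at hx hy ⊢
  exact fun i => h i x (hx i) y (hy i) l m

lemma tp_isClosed_halfspace {d : ℕ} (a : Fin d → ℝ) (I : Set (Fin (d + 1))) :
    IsClosed (tropHalfspace a I) := by
  have : tropHalfspace a I =
      ⋂ j, ⋂ (_ : j ∉ I), ⋃ i ∈ I, {x : Fin d → ℝ | ext x i - ext a i ≤ ext x j - ext a j} := by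
    ext x
    simp [tropHalfspace]
  rw [this]
  refine isClosed_iInter fun j => isClosed_iInter fun _ => ?_
  refine Set.Finite.isClosed_biUnion (Set.toFinite I) fun i _ => ?_
  exact isClosed_le ((tp_continuous_ext i).sub continuous_const)
    ((tp_continuous_ext j).sub continuous_const)

/-- Tropically convex sets are preconnected. -/
lemma tp_tropConvex_isPreconnected {d : ℕ} {P : Set (Fin d → ℝ)} (hP : TropConvex P) :
    IsPreconnected P := by
  rcases P.eq_empty_or_nonempty with h | ⟨x₀, hx₀⟩
  · rw [h]; exact isPreconnected_empty
  refine isPreconnected_of_forall x₀ fun y hy => ?_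
  set h : ℝ → (Fin d → ℝ) := fun u => tropComb u 0 x₀ y with hdef
  have hcont : Continuous h := by
    refine continuous_pi fun i => ?_
    simp only [hdef, tropComb]
    exact (((continuous_id.add continuous_const).min continuous_const).sub
      (continuous_id.min continuous_const))
  set U₀ : ℝ := -(‖x₀‖ + ‖y‖ + 1) with hU₀
  set U₁ : ℝ := ‖x₀‖ + ‖y‖ + 1 with hU₁
  have hbx : ∀ i, |x₀ i| ≤ ‖x₀‖ := fun i => by
    simpa using norm_le_pi_norm x₀ i
  have hby : ∀ i, |y i| ≤ ‖y‖ := fun i => by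
    simpa using norm_le_pi_norm y i
  have hx0n : 0 ≤ ‖x₀‖ := norm_nonneg _
  have hyn : 0 ≤ ‖y‖ := norm_nonneg _
  have h0 : h U₀ = x₀ := by
    funext i
    have h1 : U₀ + x₀ i ≤ 0 + y i := by
      have := abs_le.mp (hbx i); have := abs_le.mp (hby i)
      simp only [hU₀]; linarith
    have h2 : U₀ ≤ (0:ℝ) := by simp only [hU₀]; linarith
    simp only [hdef, tropComb, min_eq_left h1, min_eq_left h2]
    ring
  have h1 : h U₁ = y := by
    funext i
    have h1 : 0 + y i ≤ U₁ + x₀ i := by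
      have := abs_le.mp (hbx i); have := abs_le.mp (hby i)
      simp only [hU₁]; linarith
    have h2 : (0:ℝ) ≤ U₁ := by simp only [hU₁]; linarith
    simp only [hdef, tropComb, min_eq_right h1, min_eq_right h2]
    ring
  refine ⟨h '' Set.Icc U₀ U₁, ?_, ?_, ?_, ?_⟩
  · rintro _ ⟨u, _, rfl⟩
    exact hP x₀ hx₀ y hy u 0
  · refine ⟨U₀, ⟨le_refl _, by simp only [hU₀, hU₁]; linarith⟩, h0⟩
  · refine ⟨U₁, ⟨by simp only [hU₀, hU₁]; linarith, le_refl _⟩, h1⟩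
  · exact isPreconnected_Icc.image h hcont.continuousOn

/-- Finitary tropical combinations stay in a tropically convex set. -/
lemma tp_comb_mem {d : ℕ} {S : Set (Fin d → ℝ)} (hS : TropConvex S) {ι : Type*}
    (s : Finset ι) (hs : s.Nonempty) (lam : ι → ℝ) (w : ι → Fin d → ℝ)
    (hw : ∀ k ∈ s, w k ∈ S) :
    (fun i => (s.inf' hs fun k => lam k + w k i) - s.inf' hs lam) ∈ S := by
  induction hs using Finset.Nonempty.cons_induction with
  | singleton a => simpa using hw a (by simp)
  | cons a s ha hs ih =>
    have hwa : w a ∈ S := hw a (by simp)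
    have hws : ∀ k ∈ s, w k ∈ S := fun k hk => hw k (by simp [hk])
    have key : (fun i => ((s.cons a ha).inf' (Finset.cons_nonempty ha) fun k => lam k + w k i)
        - (s.cons a ha).inf' (Finset.cons_nonempty ha) lam)
        = tropComb (lam a) (s.inf' hs lam) (w a)
            (fun i => (s.inf' hs fun k => lam k + w k i) - s.inf' hs lam) := by
      funext i
      have h2 : s.inf' hs lam + ((s.inf' hs fun k => lam k + w k i) - s.inf' hs lam)
          = s.inf' hs fun k => lam k + w k i := by ring
      rw [Finset.inf'_cons hs, Finset.inf'_cons hs]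
      simp only [tropComb]
      rw [h2]
    rw [key]
    exact hS (w a) hwa _ (ih hws) (lam a) (s.inf' hs lam)


/-- If `P ⊆ ℝ^d` is the intersection of `d+1` closed tropical halfspaces,
is bounded, and is not contained in any tropical hyperplane,
then `P` is the tropical convex hull of some `d+1` points. -/
theorem bounded_intersection_of_halfspaces_is_tropical_simplex {d : ℕ}
    (a : Fin (d + 1) → Fin d → ℝ) (I : Fin (d + 1) → Set (Fin (d + 1)))
    (hne : ∀ m, (I m).Nonempty) (hprop : ∀ m, I m ≠ Set.univ)
    (P : Set (Fin d → ℝ)) (hP : P = ⋂ m, tropHalfspace (a m) (I m))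
    (hbd : Bornology.IsBounded P)
    (hhyp : ∀ b : Fin d → ℝ, ¬P ⊆ tropHyperplane b) :
    ∃ v : Fin (d + 1) → Fin d → ℝ, P = tconv (Set.range v) := by
  classical
  rcases Nat.eq_zero_or_pos d with hd0 | hdpos
  · exfalso
    subst hd0
    obtain ⟨i, hi⟩ := hne 0
    refine hprop 0 (Set.eq_univ_of_forall fun j => ?_)
    have hji : j = i := Fin.ext (by omega)
    rwa [hji]
  -- Basic facts about P
  have hPmem : ∀ x ∈ P, ∀ m, ∀ j ∉ I m,
      ∃ i ∈ I m, ext x i - ext (a m) i ≤ ext x j - ext (a m) j := by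
    intro x hx m
    have hx' : x ∈ tropHalfspace (a m) (I m) := by
      rw [hP] at hx; exact Set.mem_iInter.mp hx m
    exact hx'
  have hPconv : TropConvex P := by
    rw [hP]; exact tp_tropConvex_iInter fun m => tp_tropConvex_halfspace _ _
  have hPclosed : IsClosed P := by
    rw [hP]; exact isClosed_iInter fun m => tp_isClosed_halfspace _ _
  have hPne : P.Nonempty := by
    by_contra hcon
    rw [Set.not_nonempty_iff_eq_empty] at hcon
    exact hhyp 0 (by rw [hcon]; exact Set.empty_subset _)
  obtain ⟨R₀, hR₀⟩ := (isBounded_iff_forall_norm_le).mp hbd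
  have hPcomp : IsCompact P := by
    refine (isCompact_closedBall (0 : Fin d → ℝ) R₀).of_isClosed_subset hPclosed ?_
    intro x hx
    simpa [Metric.mem_closedBall, dist_zero_right] using hR₀ x hx
  -- coordinatewise maximizers of differences
  have hmax : ∀ l k : Fin (d + 1),
      ∃ z ∈ P, ∀ x ∈ P, ext x l - ext x k ≤ ext z l - ext z k := by
    intro l k
    obtain ⟨z, hzP, hz⟩ := hPcomp.exists_isMaxOn hPne
      (((tp_continuous_ext l).sub (tp_continuous_ext k)).continuousOn)
    exact ⟨z, hzP, fun x hx => hz hx⟩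
  choose Z hZP hZmax using hmax
  set c : Fin (d + 1) → Fin (d + 1) → ℝ := fun l k => ext (Z l k) l - ext (Z l k) k with hc
  have hcle : ∀ x ∈ P, ∀ l k, ext x l - ext x k ≤ c l k := fun x hx l k => hZmax l k x hx
  have hcdiag : ∀ l, c l l = 0 := fun l => sub_self _
  -- the corner points
  set v : Fin (d + 1) → Fin d → ℝ := fun k i => c i.succ k - c 0 k with hv
  have hextv : ∀ (k : Fin (d + 1)) (l : Fin (d + 1)), ext (v k) l = c l k - c 0 k := by
    intro k l
    induction l using Fin.cases with
    | zero => rw [tp_ext_zero, sub_self]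
    | succ i => rw [tp_ext_succ]
  -- strong witness: a single element of I m below all of the complement
  have hwit : ∀ x ∈ P, ∀ m, ∃ i ∈ I m, ∀ j ∉ I m,
      ext x i - ext (a m) i ≤ ext x j - ext (a m) j := by
    intro x hx m
    have hIc : (Finset.univ.filter (fun j => j ∉ I m)).Nonempty := by
      obtain ⟨j, hj⟩ := (Set.ne_univ_iff_exists_notMem _).mp (hprop m)
      exact ⟨j, by simp [hj]⟩
    obtain ⟨j₀, hj₀, hj₀min⟩ :=
      Finset.exists_min_image _ (fun j => ext x j - ext (a m) j) hIc
    simp only [Finset.mem_filter, Finset.mem_univ, true_and] at hj₀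
    obtain ⟨i, hiI, hile⟩ := hPmem x hx m j₀ hj₀
    refine ⟨i, hiI, fun j hj => le_trans hile (hj₀min j ?_)⟩
    simp [hj]
  -- capping: for every point and coordinate, some halfspace caps that coordinate
  have hcap : ∀ x ∈ P, ∀ r : Fin (d + 1), ∃ m, r ∈ I m ∧
      ∀ i ∈ I m, i ≠ r → ∃ j, j ∉ I m ∧
        ext x j - ext (a m) j < ext x i - ext (a m) i := by
    intro x hx r
    set F : ℝ := Finset.univ.sup' Finset.univ_nonempty
      (fun p : Fin (d + 1) × Fin (d + 1) => |ext x p.1 - ext (a p.2) p.1|) with hF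
    have hFb : ∀ l m', |ext x l - ext (a m') l| ≤ F := fun l m' => by
      rw [hF]
      exact Finset.le_sup'
        (fun p : Fin (d + 1) × Fin (d + 1) => |ext x p.1 - ext (a p.2) p.1|)
        (Finset.mem_univ (l, m'))
    have hFnn : 0 ≤ F := le_trans (abs_nonneg _) (hFb 0 0)
    have hxn : 0 ≤ ‖x‖ := norm_nonneg _
    have hR0nn : 0 ≤ R₀ := le_trans hxn (hR₀ x hx)
    set t : ℝ := 1 + R₀ + ‖x‖ + 2 * F with ht
    have htpos : 2 * F < t := by rw [ht]; linarith
    set wv : Fin (d + 1) → ℝ := fun l => ext x l + (if l = r then t else 0) with hwv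
    set xt : Fin d → ℝ := fun i => wv i.succ - wv 0 with hxt
    have hxtext : ∀ l, ext xt l = wv l - wv 0 := by
      intro l
      induction l using Fin.cases with
      | zero => rw [tp_ext_zero, sub_self]
      | succ i => rw [tp_ext_succ]
    have hxtP : xt ∉ P := by
      intro hmem
      have hb := hR₀ xt hmem
      have hgood : ∃ i0 : Fin d, R₀ < |xt i0| := by
        induction r using Fin.cases with
        | zero =>
          refine ⟨⟨0, hdpos⟩, ?_⟩
          have h1 : xt ⟨0, hdpos⟩ = x ⟨0, hdpos⟩ - t := by
            have hne0 : ((⟨0, hdpos⟩ : Fin d).succ : Fin (d + 1)) ≠ 0 :=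
              Fin.succ_ne_zero _
            show wv (⟨0, hdpos⟩ : Fin d).succ - wv 0 = _
            simp only [hwv]
            rw [if_neg hne0, tp_ext_succ, tp_ext_zero]
            simp
          have h3 : |x ⟨0, hdpos⟩| ≤ ‖x‖ := by
            simpa using norm_le_pi_norm x ⟨0, hdpos⟩
          have h4 : t - x ⟨0, hdpos⟩ ≤ |xt ⟨0, hdpos⟩| := by
            rw [h1, abs_sub_comm]
            exact le_abs_self _
          have h5 : x ⟨0, hdpos⟩ ≤ |x ⟨0, hdpos⟩| := le_abs_self _
          rw [ht] at h4
          linarith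
        | succ i =>
          refine ⟨i, ?_⟩
          have h1 : xt i = x i + t := by
            have hne0 : (0 : Fin (d + 1)) ≠ i.succ := (Fin.succ_ne_zero i).symm
            show wv i.succ - wv 0 = _
            simp only [hwv]
            rw [if_neg hne0, tp_ext_succ, tp_ext_zero]
            simp
          have h3 : |x i| ≤ ‖x‖ := by simpa using norm_le_pi_norm x i
          have h4 : x i + t ≤ |xt i| := by rw [h1]; exact le_abs_self _
          have h5 : -|x i| ≤ x i := neg_abs_le _
          rw [ht] at h4
          linarith
      obtain ⟨i0, hi0⟩ := hgood
      have : |xt i0| ≤ ‖xt‖ := by simpa using norm_le_pi_norm xt i0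
      linarith
    have hviol : ∃ m, ∃ j, j ∉ I m ∧ ∀ i ∈ I m,
        ext xt j - ext (a m) j < ext xt i - ext (a m) i := by
      have h1 : ∃ m, xt ∉ tropHalfspace (a m) (I m) := by
        by_contra hcon
        push_neg at hcon
        exact hxtP (hP ▸ Set.mem_iInter.mpr hcon)
      obtain ⟨m, hm⟩ := h1
      simp only [tropHalfspace, Set.mem_setOf_eq] at hm
      push_neg at hm
      obtain ⟨j, hj, hjj⟩ := hm
      exact ⟨m, j, hj, hjj⟩
    obtain ⟨m, j, hj, hjj⟩ := hviol
    -- rewrite the violation in terms of wv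
    have hjj' : ∀ i ∈ I m, wv j - ext (a m) j < wv i - ext (a m) i := by
      intro i hi
      have := hjj i hi
      rw [hxtext, hxtext] at this
      linarith
    have hrI : r ∈ I m := by
      by_contra hrI
      rcases eq_or_ne j r with rfl | hjr
      · obtain ⟨i₀, hi₀⟩ := hne m
        have hi₀r : i₀ ≠ j := fun h => hrI (h ▸ hi₀)
        have h1 := hjj' i₀ hi₀
        have h2 : wv i₀ = ext x i₀ := by simp [hwv, hi₀r]
        have h3 : wv j = ext x j + t := by simp [hwv]
        have h4 := hFb i₀ m
        have h5 := hFb j m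
        rw [h2, h3] at h1
        rw [abs_le] at h4 h5
        linarith [h4.1, h4.2, h5.1, h5.2]
      · obtain ⟨i, hiI, hile⟩ := hPmem x hx m j hj
        have h1 := hjj' i hiI
        have hir : i ≠ r := fun h => hrI (h ▸ hiI)
        have h2 : wv i = ext x i := by simp [hwv, hir]
        have h3 : wv j = ext x j := by simp [hwv, hjr]
        rw [h2, h3] at h1
        linarith
    refine ⟨m, hrI, fun i hiI hir => ⟨j, hj, ?_⟩⟩
    have hjr : j ≠ r := fun h => hj (h ▸ hrI)
    have h1 := hjj' i hiI
    have h2 : wv i = ext x i := by simp [hwv, hir]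
    have h3 : wv j = ext x j := by simp [hwv, hjr]
    rw [h2, h3] at h1
    linarith
  -- cap uniqueness
  have hcapinj : ∀ x ∈ P, ∀ m, ∀ r r' : Fin (d + 1),
      (r ∈ I m ∧ ∀ i ∈ I m, i ≠ r → ∃ j, j ∉ I m ∧
        ext x j - ext (a m) j < ext x i - ext (a m) i) →
      (r' ∈ I m ∧ ∀ i ∈ I m, i ≠ r' → ∃ j, j ∉ I m ∧
        ext x j - ext (a m) j < ext x i - ext (a m) i) → r = r' := by
    intro x hx m r r' hr hr'
    obtain ⟨i₀, hi₀I, hi₀⟩ := hwit x hx m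
    have h1 : i₀ = r := by
      by_contra hne'
      obtain ⟨j, hj, hlt⟩ := hr.2 i₀ hi₀I hne'
      exact absurd (hi₀ j hj) (not_le.mpr hlt)
    have h2 : i₀ = r' := by
      by_contra hne'
      obtain ⟨j, hj, hlt⟩ := hr'.2 i₀ hi₀I hne'
      exact absurd (hi₀ j hj) (not_le.mpr hlt)
    rw [← h1, h2]
  -- THE CORNER THEOREM: every corner point lies in every halfspace
  have hcorner : ∀ k m, v k ∈ tropHalfspace (a m) (I m) := by
    intro k m
    by_contra hcon
    simp only [tropHalfspace, Set.mem_setOf_eq] at hcon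
    push_neg at hcon
    obtain ⟨js, hjs, hscon⟩ := hcon
    have hKey : ∀ i ∈ I m, c js k - ext (a m) js < c i k - ext (a m) i := by
      intro i hi
      have := hscon i hi
      rw [hextv, hextv] at this
      linarith
    have hplus : ∀ i ∈ I m,
        ext (Z i k) js - ext (a m) js < ext (Z i k) i - ext (a m) i := by
      intro i hi
      have h1 : ext (Z i k) js - ext (Z i k) k ≤ c js k := hcle _ (hZP i k) js k
      have h2 : ext (Z i k) i - ext (Z i k) k = c i k := rfl
      have h3 := hKey i hi
      linarith
    -- the lobes
    set U : Fin (d + 1) → Set (Fin d → ℝ) := fun r =>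
      {y | ∀ i ∈ I m, i ≠ r → ∃ j, j ∉ I m ∧
        ext y j - ext (a m) j < ext y i - ext (a m) i} with hU
    have hUopen : ∀ r, IsOpen (U r) := by
      intro r
      have hEq : U r = ⋂ i ∈ {i | i ∈ I m ∧ i ≠ r}, ⋃ j ∈ {j | j ∉ I m},
          {y : Fin d → ℝ | ext y j - ext (a m) j < ext y i - ext (a m) i} := by
        ext y
        simp only [hU, Set.mem_setOf_eq, Set.mem_iInter, Set.mem_iUnion]
        constructor
        · rintro h i ⟨hi, hir⟩
          obtain ⟨j, hj, hlt⟩ := h i hi hir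
          exact ⟨j, hj, hlt⟩
        · intro h i hi hir
          obtain ⟨j, hj, hlt⟩ := h i ⟨hi, hir⟩
          exact ⟨j, hj, hlt⟩
      rw [hEq]
      refine Set.Finite.isOpen_biInter (Set.toFinite _) fun i _ => ?_
      refine isOpen_biUnion fun j _ => ?_
      exact isOpen_lt ((tp_continuous_ext j).sub continuous_const)
        ((tp_continuous_ext i).sub continuous_const)
    -- cover
    have hcover : ∀ y ∈ P, ∃ r ∈ I m, y ∈ U r := by
      intro y hy
      choose g hg1 hg2 using fun r => hcap y hy r
      have hginj : Function.Injective g := by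
        intro r r' heq
        have h2 := hg1 r'
        have h3 := hg2 r'
        rw [← heq] at h2 h3
        exact hcapinj y hy (g r) r r' ⟨hg1 r, hg2 r⟩ ⟨h2, h3⟩
      have hgsurj : Function.Surjective g := Finite.injective_iff_surjective.mp hginj
      obtain ⟨r, hr⟩ := hgsurj m
      have h1 := hg1 r
      have h2 := hg2 r
      rw [hr] at h1 h2
      exact ⟨r, h1, h2⟩
    -- z^i avoids its own lobe
    have hnotU : ∀ i ∈ I m, Z i k ∉ U i := by
      intro i hi hmem
      obtain ⟨i₀, hi₀I, hi₀⟩ := hwit (Z i k) (hZP i k) m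
      have h1 : i₀ = i := by
        by_contra hne'
        obtain ⟨j, hj, hlt⟩ := hmem i₀ hi₀I hne'
        exact absurd (hi₀ j hj) (not_le.mpr hlt)
      subst h1
      exact absurd (hi₀ js hjs) (not_le.mpr (hplus i₀ hi))
    -- two distinct nonempty lobes
    obtain ⟨i₁, hi₁⟩ := hne m
    obtain ⟨ρ, hρI, hρ⟩ := hcover (Z i₁ k) (hZP i₁ k)
    obtain ⟨σ, hσI, hσ⟩ := hcover (Z ρ k) (hZP ρ k)
    have hσne : σ ≠ ρ := fun h => hnotU ρ hρI (h ▸ hσ)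
    -- preconnectedness contradiction
    have hpre := tp_tropConvex_isPreconnected hPconv
    set V₂ : Set (Fin d → ℝ) := ⋃ r ∈ {r | r ∈ I m ∧ r ≠ ρ}, U r with hV₂
    have h2open : IsOpen V₂ := isOpen_biUnion fun r _ => hUopen r
    have hsub : P ⊆ U ρ ∪ V₂ := by
      intro y hy
      obtain ⟨r, hrI, hyr⟩ := hcover y hy
      rcases eq_or_ne r ρ with rfl | hrρ
      · exact Or.inl hyr
      · refine Or.inr ?_
        rw [hV₂]
        exact Set.mem_biUnion ⟨hrI, hrρ⟩ hyr
    have hne1 : (P ∩ U ρ).Nonempty := ⟨Z i₁ k, hZP i₁ k, hρ⟩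
    have hne2 : (P ∩ V₂).Nonempty := by
      refine ⟨Z ρ k, hZP ρ k, ?_⟩
      rw [hV₂]
      exact Set.mem_biUnion ⟨hσI, hσne⟩ hσ
    obtain ⟨y, hyP, hyu, hyv⟩ := hpre (U ρ) V₂ (hUopen ρ) h2open hsub hne1 hne2
    simp only [hV₂, Set.mem_iUnion, Set.mem_setOf_eq] at hyv
    obtain ⟨r, ⟨hrI, hrρ⟩, hyr⟩ := hyv
    exact hrρ (hcapinj y hyP m r ρ ⟨hrI, hyr⟩ ⟨hρI, hyu⟩)
  -- Final assembly
  refine ⟨v, Set.Subset.antisymm ?_ ?_⟩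
  · -- P ⊆ tconv (range v)
    intro x hx
    have hmem : ∀ S ∈ {S : Set (Fin d → ℝ) | TropConvex S ∧ Set.range v ⊆ S}, x ∈ S := by
      rintro S ⟨hSconv, hSsub⟩
      set lam : Fin (d + 1) → ℝ := fun k => ext x k + c 0 k with hlam
      have hA : ∀ l : Fin (d + 1),
          (Finset.univ.inf' Finset.univ_nonempty fun k => lam k + ext (v k) l) = ext x l := by
        intro l
        apply le_antisymm
        · refine le_trans (Finset.inf'_le _ (Finset.mem_univ l)) ?_
          rw [hextv, hcdiag]
          simp [hlam]
        · refine Finset.le_inf' _ _ fun k _ => ?_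
          rw [hextv]
          have := hcle x hx l k
          simp only [hlam]
          linarith
      have hx_eq : x = fun i =>
          (Finset.univ.inf' Finset.univ_nonempty fun k => lam k + v k i)
            - Finset.univ.inf' Finset.univ_nonempty lam := by
        funext i
        have h1 : (fun k => lam k + v k i) = fun k => lam k + ext (v k) i.succ := by
          funext k; rw [tp_ext_succ]
        have h2 : lam = fun k => lam k + ext (v k) 0 := by
          funext k; rw [tp_ext_zero]; ring
        rw [h1]
        conv_lhs => rw [show x i = ext x i.succ - ext x 0 by rw [tp_ext_succ, tp_ext_zero]; ring]
        rw [← hA i.succ, ← hA 0]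
        congr 1
        congr 1
        exact h2.symm
      rw [hx_eq]
      exact tp_comb_mem hSconv Finset.univ Finset.univ_nonempty lam v
        (fun k _ => hSsub (Set.mem_range_self k))
    exact Set.mem_sInter.mpr hmem
  · -- tconv (range v) ⊆ P
    refine Set.sInter_subset_of_mem ⟨hPconv, ?_⟩
    rintro _ ⟨k, rfl⟩
    rw [hP]
    exact Set.mem_iInter.mpr fun m => hcorner k m
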